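/- arXiv:1903.04335 — 2 statements merged into one kernel-verified Lean document; each statement's English description precedes it below -/
import Mathlib

section
/- Let K = ⋃_{ℓ=1}^L [a_ℓ, b_ℓ] ⊆ [−1,1] with −1 = a_1 < b_1 < a_2 < ⋯ < a_L < b_L = 1, let w be continuous and strictly positive on K, and let P be a real polynomial of degree at most N. Then for every d ≥ N one has sslash P sslash_d ≤ sslash P sslash_{d+1} ≤ ‖P/w‖_{L1(K)}. -/
open MeasureTheory Filter Polynomial

/-- The `(d+1) × (d+1)` symmetric Toeplitz matrix built from a vector `y ∈ ℝ^{d+1}`,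
with entries `y_{|i−j|}`. -/
noncomputable def toepFin (d : ℕ) (y : Fin (d + 1) → ℝ) :
    Matrix (Fin (d + 1)) (Fin (d + 1)) ℝ :=
  fun i j => y ⟨(((i : ℕ) : ℤ) - ((j : ℕ) : ℤ)).natAbs, by omega⟩

/-- The transplantation `P_ℓ(x) = P(((bℓ−aℓ)x + aℓ + bℓ)/2)` of a polynomial
from `[aℓ, bℓ]` to `[-1, 1]`. -/
noncomputable def transplant (aℓ bℓ : ℝ) (P : Polynomial ℝ) : Polynomial ℝ :=
  P.comp (Polynomial.C ((bℓ - aℓ) / 2) * Polynomial.X + Polynomial.C ((aℓ + bℓ) / 2))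

/-- The entries `J^ℓ_{k,n} = ∫_0^π cos(kθ) sin((n+1)θ) / w_ℓ(cos θ) dθ`, where
`w_ℓ(x) = w(((bℓ−aℓ)x + aℓ + bℓ)/2)` is the transplantation of the weight `w`. -/
noncomputable def Jent (aℓ bℓ : ℝ) (w : ℝ → ℝ) (k n : ℕ) : ℝ :=
  ∫ θ in (0:ℝ)..Real.pi,
    Real.cos (k * θ) * Real.sin ((n + 1) * θ) /
      w (((bℓ - aℓ) * Real.cos θ + aℓ + bℓ) / 2)

/-- The weighted `L1` norm `‖P/w‖_{L1(K)} = ∑_ℓ ∫_{a_ℓ}^{b_ℓ} |P(t)|/w(t) dt`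
on `K = ⋃_{ℓ<L} [a ℓ, b ℓ]`. -/
noncomputable def L1K (L : ℕ) (a b : ℕ → ℝ) (w : ℝ → ℝ) (P : Polynomial ℝ) : ℝ :=
  ∑ ℓ ∈ Finset.range L, ∫ t in (a ℓ)..(b ℓ), |P.eval t| / w t

/-- The ersatz norm `⫽P⫽_d`: the infimum of
`∑_ℓ ((b_ℓ−a_ℓ)/2)(y^{ℓ,+}_0 + y^{ℓ,−}_0)` over vectors `y^{ℓ,±} ∈ ℝ^{d+1}` with
`y^{ℓ,+} − y^{ℓ,−} = J^{ℓ,d} W^ℓ p` and `Toep_d(y^{ℓ,±}) ⪰ 0`, where `q ℓ = W^ℓ p` is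
the vector of second-kind Chebyshev coefficients of the transplantation `P_ℓ`. -/
noncomputable def ersatz (L N d : ℕ) (a b : ℕ → ℝ) (w : ℝ → ℝ) (P : Polynomial ℝ) : ℝ :=
  sInf { s : ℝ |
    ∃ q : ℕ → Fin (N + 1) → ℝ,
      (∀ ℓ < L, transplant (a ℓ) (b ℓ) P
          = ∑ n : Fin (N + 1), Polynomial.C (q ℓ n) * Polynomial.Chebyshev.U ℝ ((n : ℕ) : ℤ)) ∧
      ∃ yp ym : ℕ → Fin (d + 1) → ℝ,
        (∀ ℓ < L, ∀ k : Fin (d + 1),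
            yp ℓ k - ym ℓ k
              = ∑ n : Fin (N + 1), Jent (a ℓ) (b ℓ) w (k : ℕ) (n : ℕ) * q ℓ n) ∧
        (∀ ℓ < L, (toepFin d (yp ℓ)).PosSemidef ∧ (toepFin d (ym ℓ)).PosSemidef) ∧
        s = ∑ ℓ ∈ Finset.range L, ((b ℓ - a ℓ) / 2) * (yp ℓ 0 + ym ℓ 0) }

set_option maxHeartbeats 1000000
/-! ### Auxiliary lemmas -/

lemma U_deg_coeff : ∀ n : ℕ, (Chebyshev.U ℝ (n:ℤ)).natDegree ≤ n ∧
    (Chebyshev.U ℝ (n:ℤ)).coeff n = 2 ^ n := by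
  intro n
  induction n using Nat.strong_induction_on with
  | _ n ih =>
    match n with
    | 0 => simp [Chebyshev.U_zero]
    | 1 => constructor
           · simpa using Polynomial.natDegree_linear_le (a := (2:ℝ)) (b := 0)
           · simp [Chebyshev.U_one, coeff_X]
    | (m+2) =>
      obtain ⟨h1, h2⟩ := ih (m+1) (by omega)
      obtain ⟨h1', h2'⟩ := ih m (by omega)
      have hrec : Chebyshev.U ℝ ((m+2 : ℕ) : ℤ)
          = 2 * X * Chebyshev.U ℝ ((m+1 : ℕ) : ℤ) - Chebyshev.U ℝ (m : ℤ) := by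
        push_cast
        exact Chebyshev.U_add_two ℝ m
      constructor
      · rw [hrec]
        refine le_trans (natDegree_sub_le _ _) ?_
        simp only [max_le_iff]
        refine ⟨le_trans (natDegree_mul_le) ?_, by omega⟩
        have : (2 * X : ℝ[X]).natDegree ≤ 1 := by
          simpa using Polynomial.natDegree_linear_le (a := (2:ℝ)) (b := 0)
        omega
      · rw [hrec]
        have hns : (Chebyshev.U ℝ (m : ℤ)).coeff (m+2) = 0 :=
          coeff_eq_zero_of_natDegree_lt (by omega)
        rw [coeff_sub, hns, sub_zero]
        have : (2 * X * Chebyshev.U ℝ ((m+1:ℕ):ℤ)).coeff (m+2)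
            = 2 * (Chebyshev.U ℝ ((m+1:ℕ):ℤ)).coeff (m+1) := by
          rw [mul_assoc, mul_comm X, ← mul_assoc, coeff_mul_X]
          simp [coeff_ofNat_mul]
        rw [this, h2]
        ring

lemma exists_U_expansion : ∀ (N : ℕ) (P : ℝ[X]), P.natDegree ≤ N →
    ∃ q : Fin (N+1) → ℝ, P = ∑ n : Fin (N+1), C (q n) * Chebyshev.U ℝ ((n : ℕ) : ℤ) := by
  intro N
  induction N with
  | zero =>
    intro P hP
    refine ⟨fun _ => P.coeff 0, ?_⟩
    rw [Polynomial.eq_C_of_natDegree_le_zero hP]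
    simp [Chebyshev.U_zero]
  | succ N ih =>
    intro P hP
    set c : ℝ := P.coeff (N+1) / 2 ^ (N+1) with hc
    set Q : ℝ[X] := P - C c * Chebyshev.U ℝ (((N:ℕ)+1 : ℕ) : ℤ) with hQ
    have hQdeg : Q.natDegree ≤ N := by
      have h1 : Q.natDegree ≤ N + 1 := by
        refine le_trans (natDegree_sub_le _ _) ?_
        simp only [max_le_iff]
        exact ⟨hP, le_trans (natDegree_C_mul_le _ _) (U_deg_coeff (N+1)).1⟩
      have h2 : Q.coeff (N+1) = 0 := by
        simp only [hQ, coeff_sub, coeff_C_mul, (U_deg_coeff (N+1)).2, hc]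
        field_simp
        ring
      rw [natDegree_le_iff_coeff_eq_zero] at h1 ⊢
      intro m hm
      rcases eq_or_lt_of_le (Nat.succ_le_of_lt hm) with h | h
      · rw [← h]; exact h2
      · exact h1 m h
    obtain ⟨q, hq⟩ := ih Q hQdeg
    refine ⟨fun n => if h : (n:ℕ) < N + 1 then q ⟨n, h⟩ else c, ?_⟩
    rw [Fin.sum_univ_castSucc]
    have hlast : ((Fin.last (N+1) : Fin (N+2)) : ℕ) = N + 1 := rfl
    simp only [Fin.coe_castSucc, hlast]
    rw [dif_neg (lt_irrefl (N+1))]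
    have hsum : ∑ n : Fin (N+1),
        C (if h : (n:ℕ) < N + 1 then q ⟨n, h⟩ else c) * Chebyshev.U ℝ ((n : ℕ) : ℤ)
        = ∑ n : Fin (N+1), C (q n) * Chebyshev.U ℝ ((n : ℕ) : ℤ) := by
      refine Finset.sum_congr rfl fun n _ => ?_
      rw [dif_pos n.isLt]
    rw [hsum, ← hq, hQ]
    push_cast
    ring

lemma toepFin_symm (d : ℕ) (y : Fin (d+1) → ℝ) (i j : Fin (d+1)) :
    toepFin d y i j = toepFin d y j i := by
  unfold toepFin
  congr 1
  apply Fin.ext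
  show (((i:ℕ):ℤ) - ((j:ℕ):ℤ)).natAbs = (((j:ℕ):ℤ) - ((i:ℕ):ℤ)).natAbs
  omega

lemma toep_psd (d : ℕ) (φ : ℝ → ℝ) (hcont : Continuous φ)
    (hnn : ∀ θ, 0 ≤ φ θ) :
    (toepFin d (fun k => ∫ θ in (0:ℝ)..Real.pi, Real.cos (k * θ) * φ θ)).PosSemidef := by
  set M := toepFin d (fun k => ∫ θ in (0:ℝ)..Real.pi, Real.cos (k * θ) * φ θ) with hM
  have hMij : ∀ i j : Fin (d+1), M i j = ∫ θ in (0:ℝ)..Real.pi,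
      (Real.cos (((i:ℕ):ℝ)*θ) * Real.cos (((j:ℕ):ℝ)*θ)
        + Real.sin (((i:ℕ):ℝ)*θ) * Real.sin (((j:ℕ):ℝ)*θ)) * φ θ := by
    intro i j
    have hc : ∀ θ : ℝ, Real.cos ((((((i:ℕ):ℤ) - ((j:ℕ):ℤ)).natAbs : ℕ) : ℝ) * θ)
        = Real.cos (((i:ℕ):ℝ)*θ) * Real.cos (((j:ℕ):ℝ)*θ)
          + Real.sin (((i:ℕ):ℝ)*θ) * Real.sin (((j:ℕ):ℝ)*θ) := by
      intro θ
      have h1 : (((((i:ℕ):ℤ) - ((j:ℕ):ℤ)).natAbs : ℕ) : ℝ) = |((i:ℕ):ℝ) - ((j:ℕ):ℝ)| := by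
        rw [Nat.cast_natAbs]; push_cast; ring_nf
      rw [h1]
      rcases abs_cases (((i:ℕ):ℝ) - ((j:ℕ):ℝ)) with ⟨h, _⟩ | ⟨h, _⟩ <;> rw [h]
      · rw [sub_mul, Real.cos_sub]
      · rw [neg_mul, Real.cos_neg, sub_mul, Real.cos_sub]
    have hrfl : M i j = ∫ θ in (0:ℝ)..Real.pi,
        Real.cos ((((((i:ℕ):ℤ) - ((j:ℕ):ℤ)).natAbs : ℕ) : ℝ) * θ) * φ θ := rfl
    rw [hrfl]
    refine intervalIntegral.integral_congr fun θ _ => ?_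
    rw [hc θ]
  refine Matrix.PosSemidef.of_dotProduct_mulVec_nonneg ?_ ?_
  · ext i j
    rw [Matrix.conjTranspose_apply, star_trivial, hM]
    exact toepFin_symm _ _ _ _
  · intro x
    have hxs : star x = x := by simp
    rw [hxs]
    have hint : ∀ p : Fin (d+1) × Fin (d+1), IntervalIntegrable
        (fun θ => x p.1 * x p.2 * ((Real.cos (((p.1:ℕ):ℝ)*θ) * Real.cos (((p.2:ℕ):ℝ)*θ)
          + Real.sin (((p.1:ℕ):ℝ)*θ) * Real.sin (((p.2:ℕ):ℝ)*θ)) * φ θ)) volume 0 Real.pi := by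
      intro p
      have hc1 : ∀ (r : ℝ), Continuous fun θ : ℝ => Real.cos (r*θ) :=
        fun r => Real.continuous_cos.comp (continuous_const.mul continuous_id)
      have hs1 : ∀ (r : ℝ), Continuous fun θ : ℝ => Real.sin (r*θ) :=
        fun r => Real.continuous_sin.comp (continuous_const.mul continuous_id)
      exact (continuous_const.mul ((((hc1 _).mul (hc1 _)).add
        ((hs1 _).mul (hs1 _))).mul hcont)).intervalIntegrable _ _
    have hform : dotProduct x (M.mulVec x)
        = ∫ θ in (0:ℝ)..Real.pi,
            ((∑ i, x i * Real.cos (((i:ℕ):ℝ)*θ))^2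
              + (∑ i, x i * Real.sin (((i:ℕ):ℝ)*θ))^2) * φ θ := by
      calc dotProduct x (M.mulVec x)
          = ∑ p : Fin (d+1) × Fin (d+1), ∫ θ in (0:ℝ)..Real.pi, x p.1 * x p.2 *
              ((Real.cos (((p.1:ℕ):ℝ)*θ) * Real.cos (((p.2:ℕ):ℝ)*θ)
                + Real.sin (((p.1:ℕ):ℝ)*θ) * Real.sin (((p.2:ℕ):ℝ)*θ)) * φ θ) := by
            rw [Fintype.sum_prod_type]
            simp only [dotProduct, Matrix.mulVec]
            refine Finset.sum_congr rfl fun i _ => ?_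
            rw [Finset.mul_sum]
            refine Finset.sum_congr rfl fun j _ => ?_
            have hr : x i * (M i j * x j) = x i * x j * M i j := by ring
            rw [hr, hMij i j, ← intervalIntegral.integral_const_mul]
        _ = ∫ θ in (0:ℝ)..Real.pi, ∑ p : Fin (d+1) × Fin (d+1), x p.1 * x p.2 *
              ((Real.cos (((p.1:ℕ):ℝ)*θ) * Real.cos (((p.2:ℕ):ℝ)*θ)
                + Real.sin (((p.1:ℕ):ℝ)*θ) * Real.sin (((p.2:ℕ):ℝ)*θ)) * φ θ) :=
            (intervalIntegral.integral_finset_sum fun p _ => hint p).symm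
        _ = ∫ θ in (0:ℝ)..Real.pi,
            ((∑ i, x i * Real.cos (((i:ℕ):ℝ)*θ))^2
              + (∑ i, x i * Real.sin (((i:ℕ):ℝ)*θ))^2) * φ θ := by
            refine intervalIntegral.integral_congr fun θ _ => ?_
            rw [Fintype.sum_prod_type, pow_two, pow_two, Finset.sum_mul_sum,
              Finset.sum_mul_sum, ← Finset.sum_add_distrib]
            simp only [← Finset.sum_add_distrib, Finset.sum_mul]
            refine Finset.sum_congr rfl fun i _ => Finset.sum_congr rfl fun j _ => ?_
            ring
    rw [hform]
    refine intervalIntegral.integral_nonneg Real.pi_pos.le fun θ _ => ?_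
    exact mul_nonneg (by positivity) (hnn θ)

/-! ### The canonical moment vectors -/

noncomputable def fTheta (aℓ bℓ : ℝ) (w : ℝ → ℝ) (P : Polynomial ℝ) (θ : ℝ) : ℝ :=
  (transplant aℓ bℓ P).eval (Real.cos θ) * Real.sin θ /
    w (((bℓ - aℓ) * Real.cos θ + aℓ + bℓ) / 2)

noncomputable def yPc (aℓ bℓ : ℝ) (w : ℝ → ℝ) (P : Polynomial ℝ) (k : ℕ) : ℝ :=
  ∫ θ in (0:ℝ)..Real.pi, Real.cos (k * θ) * max (fTheta aℓ bℓ w P θ) 0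

noncomputable def yMc (aℓ bℓ : ℝ) (w : ℝ → ℝ) (P : Polynomial ℝ) (k : ℕ) : ℝ :=
  ∫ θ in (0:ℝ)..Real.pi, Real.cos (k * θ) * max (-(fTheta aℓ bℓ w P θ)) 0

section ell
variable (aℓ bℓ : ℝ) (w : ℝ → ℝ) (P : Polynomial ℝ)

lemma hmap (hab : aℓ < bℓ) :
    ∀ θ : ℝ, ((bℓ - aℓ) * Real.cos θ + aℓ + bℓ) / 2 ∈ Set.Icc aℓ bℓ := by
  intro θ
  constructor <;> nlinarith [Real.neg_one_le_cos θ, Real.cos_le_one θ]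

lemma W_cont (hab : aℓ < bℓ) (hw : ContinuousOn w (Set.Icc aℓ bℓ)) :
    Continuous fun θ : ℝ => w (((bℓ - aℓ) * Real.cos θ + aℓ + bℓ) / 2) :=
  hw.comp_continuous (by continuity) (hmap aℓ bℓ hab)

lemma W_pos (hab : aℓ < bℓ) (hwpos : ∀ x ∈ Set.Icc aℓ bℓ, 0 < w x) :
    ∀ θ : ℝ, 0 < w (((bℓ - aℓ) * Real.cos θ + aℓ + bℓ) / 2) :=
  fun θ => hwpos _ (hmap aℓ bℓ hab θ)

lemma fTheta_cont (hab : aℓ < bℓ) (hw : ContinuousOn w (Set.Icc aℓ bℓ))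
    (hwpos : ∀ x ∈ Set.Icc aℓ bℓ, 0 < w x) :
    Continuous (fTheta aℓ bℓ w P) := by
  unfold fTheta
  exact ((((transplant aℓ bℓ P).continuous).comp Real.continuous_cos).mul
    Real.continuous_sin).div (W_cont aℓ bℓ w hab hw)
    (fun θ => (W_pos aℓ bℓ w hab hwpos θ).ne')

lemma cos_mul_cont (r : ℝ) : Continuous fun θ : ℝ => Real.cos (r*θ) :=
  Real.continuous_cos.comp (continuous_const.mul continuous_id)

lemma sin_mul_cont (r : ℝ) : Continuous fun θ : ℝ => Real.sin (r*θ) :=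
  Real.continuous_sin.comp (continuous_const.mul continuous_id)

lemma diff_eq (hab : aℓ < bℓ) (hw : ContinuousOn w (Set.Icc aℓ bℓ))
    (hwpos : ∀ x ∈ Set.Icc aℓ bℓ, 0 < w x)
    (N : ℕ) (q : Fin (N+1) → ℝ)
    (hq : transplant aℓ bℓ P
      = ∑ n : Fin (N + 1), Polynomial.C (q n) * Polynomial.Chebyshev.U ℝ ((n : ℕ) : ℤ))
    (k : ℕ) :
    yPc aℓ bℓ w P k - yMc aℓ bℓ w P k
      = ∑ n : Fin (N + 1), Jent aℓ bℓ w k n * q n := by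
  have hf := fTheta_cont aℓ bℓ w P hab hw hwpos
  have hW := W_cont aℓ bℓ w hab hw
  have hWpos := W_pos aℓ bℓ w hab hwpos
  have hpt : ∀ θ : ℝ, Real.cos ((k:ℝ)*θ) * fTheta aℓ bℓ w P θ
      = ∑ n : Fin (N+1), Real.cos ((k:ℝ)*θ) * Real.sin (((n:ℕ)+1:ℝ)*θ) /
          w (((bℓ - aℓ) * Real.cos θ + aℓ + bℓ) / 2) * q n := by
    intro θ
    unfold fTheta
    rw [hq]
    simp only [eval_finset_sum, eval_mul, eval_C]
    rw [Finset.sum_mul, Finset.sum_div, Finset.mul_sum]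
    refine Finset.sum_congr rfl fun n _ => ?_
    rw [mul_assoc (q n), Polynomial.Chebyshev.U_real_cos]
    push_cast
    ring
  unfold yPc yMc
  rw [← intervalIntegral.integral_sub
      (f := fun θ => Real.cos ((k:ℝ)*θ) * max (fTheta aℓ bℓ w P θ) 0)
      (g := fun θ => Real.cos ((k:ℝ)*θ) * max (-(fTheta aℓ bℓ w P θ)) 0)
      (((cos_mul_cont k).mul (hf.max continuous_const)).intervalIntegrable _ _)
      (((cos_mul_cont k).mul (hf.neg.max continuous_const)).intervalIntegrable _ _)]
  have heq : (fun θ => Real.cos ((k:ℝ)*θ) * max (fTheta aℓ bℓ w P θ) 0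
      - Real.cos ((k:ℝ)*θ) * max (-(fTheta aℓ bℓ w P θ)) 0)
      = fun θ => Real.cos ((k:ℝ)*θ) * fTheta aℓ bℓ w P θ := by
    funext θ
    rw [← mul_sub, max_zero_sub_max_neg_zero_eq_self]
  rw [heq]
  rw [intervalIntegral.integral_congr (fun θ _ => hpt θ)]
  rw [intervalIntegral.integral_finset_sum (fun n _ => ?_)]
  · refine Finset.sum_congr rfl fun n _ => ?_
    rw [intervalIntegral.integral_mul_const]
    rfl
  · exact ((((cos_mul_cont k).mul (sin_mul_cont ((n:ℕ)+1:ℝ))).div hW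
      (fun θ => (hWpos θ).ne')).mul continuous_const).intervalIntegrable _ _

lemma yPc_psd (hab : aℓ < bℓ) (hw : ContinuousOn w (Set.Icc aℓ bℓ))
    (hwpos : ∀ x ∈ Set.Icc aℓ bℓ, 0 < w x) (d : ℕ) :
    (toepFin d (fun k : Fin (d+1) => yPc aℓ bℓ w P (k:ℕ))).PosSemidef :=
  toep_psd d _ ((fTheta_cont aℓ bℓ w P hab hw hwpos).max continuous_const)
    (fun θ => le_max_right _ _)

lemma yMc_psd (hab : aℓ < bℓ) (hw : ContinuousOn w (Set.Icc aℓ bℓ))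
    (hwpos : ∀ x ∈ Set.Icc aℓ bℓ, 0 < w x) (d : ℕ) :
    (toepFin d (fun k : Fin (d+1) => yMc aℓ bℓ w P (k:ℕ))).PosSemidef :=
  toep_psd d _ ((fTheta_cont aℓ bℓ w P hab hw hwpos).neg.max continuous_const)
    (fun θ => le_max_right _ _)

lemma val_eq (hab : aℓ < bℓ) (hw : ContinuousOn w (Set.Icc aℓ bℓ))
    (hwpos : ∀ x ∈ Set.Icc aℓ bℓ, 0 < w x) :
    ((bℓ - aℓ)/2) * (yPc aℓ bℓ w P 0 + yMc aℓ bℓ w P 0)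
      = ∫ t in aℓ..bℓ, |P.eval t| / w t := by
  have hf := fTheta_cont aℓ bℓ w P hab hw hwpos
  have hW := W_cont aℓ bℓ w hab hw
  have hWpos := W_pos aℓ bℓ w hab hwpos
  have habs : yPc aℓ bℓ w P 0 + yMc aℓ bℓ w P 0
      = ∫ θ in (0:ℝ)..Real.pi, |fTheta aℓ bℓ w P θ| := by
    unfold yPc yMc
    rw [← intervalIntegral.integral_add
        (f := fun θ => Real.cos (((0:ℕ):ℝ)*θ) * max (fTheta aℓ bℓ w P θ) 0)
        (g := fun θ => Real.cos (((0:ℕ):ℝ)*θ) * max (-(fTheta aℓ bℓ w P θ)) 0)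
        (((cos_mul_cont ((0:ℕ):ℝ)).mul (hf.max continuous_const)).intervalIntegrable _ _)
        (((cos_mul_cont ((0:ℕ):ℝ)).mul (hf.neg.max continuous_const)).intervalIntegrable _ _)]
    refine intervalIntegral.integral_congr fun θ _ => ?_
    simp only [Nat.cast_zero, zero_mul, Real.cos_zero, one_mul]
    exact max_zero_add_max_neg_zero_eq_abs_self _
  set g : ℝ → ℝ := fun x => |(transplant aℓ bℓ P).eval x| /
      w (((bℓ - aℓ) * x + aℓ + bℓ)/2) with hg
  have h2 : ∫ θ in (0:ℝ)..Real.pi, |fTheta aℓ bℓ w P θ| = ∫ x in (-1:ℝ)..1, g x := by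
    have h3 : ∫ θ in (0:ℝ)..Real.pi, |fTheta aℓ bℓ w P θ|
        = -∫ θ in (0:ℝ)..Real.pi, (-Real.sin θ) • (g ∘ Real.cos) θ := by
      rw [← intervalIntegral.integral_neg]
      refine intervalIntegral.integral_congr fun θ hθ => ?_
      have hθ' : θ ∈ Set.Icc (0:ℝ) Real.pi := by
        rwa [Set.uIcc_of_le Real.pi_pos.le] at hθ
      have hsin : 0 ≤ Real.sin θ := Real.sin_nonneg_of_nonneg_of_le_pi hθ'.1 hθ'.2
      unfold fTheta
      rw [abs_div, abs_mul, abs_of_nonneg hsin, abs_of_pos (hWpos θ)]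
      simp only [hg, smul_eq_mul, Function.comp_apply]
      ring
    rw [h3]
    have h4 : ∫ θ in (0:ℝ)..Real.pi, (-Real.sin θ) • (g ∘ Real.cos) θ
        = ∫ x in (Real.cos 0)..(Real.cos Real.pi), g x := by
      refine intervalIntegral.integral_comp_smul_deriv'
        (fun θ _ => (Real.hasDerivAt_cos θ)) Real.continuous_sin.neg.continuousOn ?_
      refine ContinuousOn.mono (s := Set.Icc (-1:ℝ) 1) ?_ ?_
      · apply ContinuousOn.div
        · exact (continuous_abs.comp (transplant aℓ bℓ P).continuous).continuousOn
        · refine hw.comp (Continuous.continuousOn (by continuity)) ?_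
          intro x hx
          exact ⟨by nlinarith [hx.1, hx.2], by nlinarith [hx.1, hx.2]⟩
        · intro x hx
          refine (hwpos _ ⟨by nlinarith [hx.1, hx.2], by nlinarith [hx.1, hx.2]⟩).ne'
      · rintro x ⟨θ, _, rfl⟩
        exact ⟨Real.neg_one_le_cos θ, Real.cos_le_one θ⟩
    rw [h4, Real.cos_zero, Real.cos_pi, intervalIntegral.integral_symm, neg_neg]
  have h5 : ∫ x in (-1:ℝ)..1, g x
      = ((bℓ - aℓ)/2)⁻¹ * ∫ t in aℓ..bℓ, |P.eval t| / w t := by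
    have hc0 : ((bℓ - aℓ)/2 : ℝ) ≠ 0 := by
      have : (0:ℝ) < (bℓ - aℓ)/2 := by linarith
      exact this.ne'
    have hgF : ∀ x : ℝ, g x = (fun t => |P.eval t| / w t) (((bℓ-aℓ)/2) * x + (aℓ+bℓ)/2) := by
      intro x
      have harg : ((bℓ - aℓ) * x + aℓ + bℓ)/2 = (bℓ-aℓ)/2 * x + (aℓ+bℓ)/2 := by ring
      simp only [hg, harg, transplant, eval_comp, eval_add, eval_mul, eval_C, eval_X]
    calc ∫ x in (-1:ℝ)..1, g x
        = ∫ x in (-1:ℝ)..1, (fun t => |P.eval t| / w t) (((bℓ-aℓ)/2) * x + (aℓ+bℓ)/2) :=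
          intervalIntegral.integral_congr fun x _ => hgF x
      _ = ((bℓ-aℓ)/2)⁻¹ • ∫ t in ((bℓ-aℓ)/2 * (-1) + (aℓ+bℓ)/2)..((bℓ-aℓ)/2 * 1 + (aℓ+bℓ)/2),
            |P.eval t| / w t := intervalIntegral.integral_comp_mul_add (a := -1) (b := 1) (fun t => |P.eval t| / w t) hc0 ((aℓ+bℓ)/2)
      _ = ((bℓ-aℓ)/2)⁻¹ * ∫ t in aℓ..bℓ, |P.eval t| / w t := by
          rw [show (bℓ-aℓ)/2 * (-1) + (aℓ+bℓ)/2 = aℓ by ring,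
              show (bℓ-aℓ)/2 * 1 + (aℓ+bℓ)/2 = bℓ by ring, smul_eq_mul]
  rw [habs, h2, h5, ← mul_assoc, mul_inv_cancel₀ (by
    have : (0:ℝ) < (bℓ - aℓ)/2 := by linarith
    exact this.ne'), one_mul]

end ell

lemma psd_toep_nonneg {d : ℕ} {y : Fin (d+1) → ℝ} (h : (toepFin d y).PosSemidef) :
    0 ≤ y 0 := by
  have h0 := h.dotProduct_mulVec_nonneg (Pi.single (0 : Fin (d+1)) (1:ℝ))
  have he : dotProduct (star (Pi.single (0 : Fin (d+1)) (1:ℝ)))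
      (Matrix.mulVec (toepFin d y) (Pi.single (0 : Fin (d+1)) (1:ℝ))) = y 0 := by
    simp [dotProduct, Matrix.mulVec, Pi.single_apply, toepFin]
  rwa [he] at h0


/-- For `d ≥ N` and `P` of degree at most `N`: `⫽P⫽_d ≤ ⫽P⫽_{d+1} ≤ ‖P/w‖_{L1(K)}`. -/
theorem ersatz_monotone_le_L1
    (L : ℕ) (hL : 0 < L) (a b : ℕ → ℝ)
    (ha0 : a 0 = -1) (hbL : b (L - 1) = 1)
    (hab : ∀ ℓ < L, a ℓ < b ℓ)
    (hgap : ∀ ℓ, ℓ + 1 < L → b ℓ < a (ℓ + 1))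
    (w : ℝ → ℝ)
    (hw : ContinuousOn w (⋃ ℓ ∈ Finset.range L, Set.Icc (a ℓ) (b ℓ)))
    (hwpos : ∀ x ∈ ⋃ ℓ ∈ Finset.range L, Set.Icc (a ℓ) (b ℓ), 0 < w x)
    (N d : ℕ) (hd : N ≤ d)
    (P : Polynomial ℝ) (hP : P.natDegree ≤ N) :
    ersatz L N d a b w P ≤ ersatz L N (d + 1) a b w P ∧
    ersatz L N (d + 1) a b w P ≤ L1K L a b w P := by
  classical
  have hIcc : ∀ ℓ, ℓ < L →
      Set.Icc (a ℓ) (b ℓ) ⊆ ⋃ ℓ ∈ Finset.range L, Set.Icc (a ℓ) (b ℓ) := fun ℓ hℓ x hx =>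
    Set.mem_biUnion (Finset.mem_range.mpr hℓ) hx
  have hwℓ : ∀ ℓ, ℓ < L → ContinuousOn w (Set.Icc (a ℓ) (b ℓ)) :=
    fun ℓ hℓ => hw.mono (hIcc ℓ hℓ)
  have hwposℓ : ∀ ℓ, ℓ < L → ∀ x ∈ Set.Icc (a ℓ) (b ℓ), 0 < w x :=
    fun ℓ hℓ x hx => hwpos x (hIcc ℓ hℓ hx)
  have hdeg : ∀ ℓ : ℕ, (transplant (a ℓ) (b ℓ) P).natDegree ≤ N := by
    intro ℓ
    refine le_trans (Polynomial.natDegree_comp_le) ?_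
    have h1 : (C ((b ℓ - a ℓ)/2) * X + C ((a ℓ + b ℓ)/2)).natDegree ≤ 1 :=
      Polynomial.natDegree_linear_le
    calc P.natDegree * (C ((b ℓ - a ℓ)/2) * X + C ((a ℓ + b ℓ)/2)).natDegree
        ≤ N * 1 := Nat.mul_le_mul hP h1
      _ = N := mul_one N
  have hqex : ∀ ℓ : ℕ, ∃ qv : Fin (N+1) → ℝ, transplant (a ℓ) (b ℓ) P
      = ∑ n : Fin (N+1), C (qv n) * Chebyshev.U ℝ ((n:ℕ):ℤ) :=
    fun ℓ => exists_U_expansion N _ (hdeg ℓ)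
  choose q hq using hqex
  set S : ℕ → Set ℝ := fun d' => { s : ℝ |
    ∃ q : ℕ → Fin (N + 1) → ℝ,
      (∀ ℓ < L, transplant (a ℓ) (b ℓ) P
          = ∑ n : Fin (N + 1), Polynomial.C (q ℓ n) * Polynomial.Chebyshev.U ℝ ((n : ℕ) : ℤ)) ∧
      ∃ yp ym : ℕ → Fin (d' + 1) → ℝ,
        (∀ ℓ < L, ∀ k : Fin (d' + 1),
            yp ℓ k - ym ℓ k
              = ∑ n : Fin (N + 1), Jent (a ℓ) (b ℓ) w (k : ℕ) (n : ℕ) * q ℓ n) ∧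
        (∀ ℓ < L, (toepFin d' (yp ℓ)).PosSemidef ∧ (toepFin d' (ym ℓ)).PosSemidef) ∧
        s = ∑ ℓ ∈ Finset.range L, ((b ℓ - a ℓ) / 2) * (yp ℓ 0 + ym ℓ 0) } with hSdef
  have hers : ∀ d', ersatz L N d' a b w P = sInf (S d') := fun d' => rfl
  have hbdd : ∀ d', BddBelow (S d') := by
    intro d'
    refine ⟨0, ?_⟩
    rintro s ⟨q', hq', yp, ym, hdiff, hpsd, rfl⟩
    refine Finset.sum_nonneg fun ℓ hℓ => ?_
    have hℓ' := Finset.mem_range.mp hℓ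
    have h1 := psd_toep_nonneg (hpsd ℓ hℓ').1
    have h2 := psd_toep_nonneg (hpsd ℓ hℓ').2
    have h3 := hab ℓ hℓ'
    apply mul_nonneg (by linarith) (by linarith)
  have hmem : ∀ d', L1K L a b w P ∈ S d' := by
    intro d'
    refine ⟨q, (fun ℓ _ => hq ℓ), fun ℓ k => yPc (a ℓ) (b ℓ) w P (k:ℕ),
      fun ℓ k => yMc (a ℓ) (b ℓ) w P (k:ℕ), ?_, ?_, ?_⟩
    · intro ℓ hℓ k
      exact diff_eq (a ℓ) (b ℓ) w P (hab ℓ hℓ) (hwℓ ℓ hℓ) (hwposℓ ℓ hℓ) N (q ℓ) (hq ℓ) k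
    · intro ℓ hℓ
      exact ⟨yPc_psd (a ℓ) (b ℓ) w P (hab ℓ hℓ) (hwℓ ℓ hℓ) (hwposℓ ℓ hℓ) d',
        yMc_psd (a ℓ) (b ℓ) w P (hab ℓ hℓ) (hwℓ ℓ hℓ) (hwposℓ ℓ hℓ) d'⟩
    · unfold L1K
      refine Finset.sum_congr rfl fun ℓ hℓ => ?_
      have hℓ' := Finset.mem_range.mp hℓ
      have hv := val_eq (a ℓ) (b ℓ) w P (hab ℓ hℓ') (hwℓ ℓ hℓ') (hwposℓ ℓ hℓ')
      rw [← hv]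
      norm_num
  constructor
  · rw [hers, hers]
    refine csInf_le_csInf (hbdd d) ⟨_, hmem (d+1)⟩ ?_
    rintro s ⟨q', hq', yp, ym, hdiff, hpsd, rfl⟩
    refine ⟨q', hq', fun ℓ k => yp ℓ k.castSucc, fun ℓ k => ym ℓ k.castSucc, ?_, ?_, ?_⟩
    · intro ℓ hℓ k
      have := hdiff ℓ hℓ k.castSucc
      simpa using this
    · intro ℓ hℓ
      obtain ⟨h1, h2⟩ := hpsd ℓ hℓ
      have he1 : toepFin d (fun k => yp ℓ k.castSucc)
          = (toepFin (d+1) (yp ℓ)).submatrix Fin.castSucc Fin.castSucc := by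
        ext i j
        rfl
      have he2 : toepFin d (fun k => ym ℓ k.castSucc)
          = (toepFin (d+1) (ym ℓ)).submatrix Fin.castSucc Fin.castSucc := by
        ext i j
        rfl
      exact ⟨he1 ▸ h1.submatrix _, he2 ▸ h2.submatrix _⟩
    · refine Finset.sum_congr rfl fun ℓ hℓ => ?_
      simp [Fin.castSucc_zero]
  · rw [hers]
    exact csInf_le (hbdd (d+1)) (hmem (d+1))
end

section
/- Let v be a continuous, strictly positive function on [−1, 1], let N ≥ 0 and d ≥ N, and let J ∈ ℝ^{(d+1)×(N+1)} be the matrix with entries J_{k,n} = ∫_0^π cos(kθ)·sin((n+1)θ)/v(cos θ) dθ for 0 ≤ k ≤ d and 0 ≤ n ≤ N. Then J is injective, i.e. J q = 0 for q ∈ ℝ^{N+1} implies q = 0. -/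
open MeasureTheory

private lemma int_cos_zero' (c : ℝ) (hc : c ≠ 0) (hs : Real.sin (c * Real.pi) = 0) :
    ∫ θ in (0:ℝ)..Real.pi, Real.cos (c * θ) = 0 := by
  rw [intervalIntegral.integral_comp_mul_left (fun x => Real.cos x) hc]
  simp [integral_cos, hs]

private lemma sin_orth' (m n : ℕ) :
    ∫ θ in (0:ℝ)..Real.pi, Real.sin (((m:ℝ)+1)*θ) * Real.sin (((n:ℝ)+1)*θ)
      = if m = n then Real.pi / 2 else 0 := by
  have key : ∀ θ : ℝ, Real.sin (((m:ℝ)+1)*θ) * Real.sin (((n:ℝ)+1)*θ)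
      = (Real.cos ((((m:ℝ)+1)-((n:ℝ)+1))*θ) - Real.cos ((((m:ℝ)+1)+((n:ℝ)+1))*θ)) / 2 := by
    intro θ
    have := Real.cos_sub_cos ((((m:ℝ)+1)-((n:ℝ)+1))*θ) ((((m:ℝ)+1)+((n:ℝ)+1))*θ)
    have h1 : (((((m:ℝ)+1)-((n:ℝ)+1))*θ) + ((((m:ℝ)+1)+((n:ℝ)+1))*θ)) / 2 = ((m:ℝ)+1)*θ := by ring
    have h2 : (((((m:ℝ)+1)-((n:ℝ)+1))*θ) - ((((m:ℝ)+1)+((n:ℝ)+1))*θ)) / 2 = -(((n:ℝ)+1)*θ) := by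
      ring
    rw [h1, h2, Real.sin_neg] at this
    linarith
  simp_rw [key]
  have hi1 : IntervalIntegrable (fun θ => Real.cos ((((m:ℝ)+1)-((n:ℝ)+1))*θ)) volume 0 Real.pi :=
    (Real.continuous_cos.comp (continuous_const.mul continuous_id)).intervalIntegrable _ _
  have hi2 : IntervalIntegrable (fun θ => Real.cos ((((m:ℝ)+1)+((n:ℝ)+1))*θ)) volume 0 Real.pi :=
    (Real.continuous_cos.comp (continuous_const.mul continuous_id)).intervalIntegrable _ _
  rw [intervalIntegral.integral_div, intervalIntegral.integral_sub hi1 hi2]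
  have h2 : ∫ θ in (0:ℝ)..Real.pi, Real.cos ((((m:ℝ)+1)+((n:ℝ)+1))*θ) = 0 := by
    have : (((m:ℝ)+1)+((n:ℝ)+1)) = ((m+n+2 : ℕ) : ℝ) := by push_cast; ring
    rw [this]
    exact int_cos_zero' _ (by positivity) (Real.sin_nat_mul_pi _)
  rw [h2]
  by_cases h : m = n
  · subst h
    simp only [sub_self, zero_mul, Real.cos_zero]
    rw [intervalIntegral.integral_const]
    simp
  · have h1 : ∫ θ in (0:ℝ)..Real.pi, Real.cos ((((m:ℝ)+1)-((n:ℝ)+1))*θ) = 0 := by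
      refine int_cos_zero' _ ?_ ?_
      · intro hc
        have : (m:ℝ) = (n:ℝ) := by linarith
        exact h (by exact_mod_cast this)
      · have : (((m:ℝ)+1)-((n:ℝ)+1)) * Real.pi = (m:ℝ)*Real.pi - (n:ℝ)*Real.pi := by ring
        rw [this, Real.sin_sub, Real.sin_nat_mul_pi, Real.sin_nat_mul_pi]
        ring
    rw [h1]
    simp [h]

private lemma sin_expand'' (n : ℕ) : ∃ a : ℕ → ℝ, ∀ θ : ℝ,
    Real.sin (((n:ℝ)+1)*θ) = (∑ k ∈ Finset.range (n+1), a k * Real.cos ((k:ℝ)*θ)) * Real.sin θ := by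
  induction n using Nat.strong_induction_on with
  | _ n ih =>
    match n with
    | 0 =>
      exact ⟨fun _ => 1, fun θ => by simp⟩
    | 1 =>
      refine ⟨fun k => if k = 1 then 2 else 0, fun θ => ?_⟩
      rw [Finset.sum_range_succ, Finset.sum_range_one]
      norm_num
      rw [Real.sin_two_mul]
      ring
    | (n+2) =>
      obtain ⟨a, ha⟩ := ih n (by omega)
      refine ⟨fun k => if k = n+2 then 2 else if k ≤ n then a k else 0, fun θ => ?_⟩
      have hstep : Real.sin ((((n+2:ℕ):ℝ)+1)*θ)
          = Real.sin (((n:ℝ)+1)*θ) + 2 * Real.sin θ * Real.cos (((n+2:ℕ):ℝ)*θ) := by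
        have h := Real.sin_sub_sin (((n:ℝ)+3)*θ) (((n:ℝ)+1)*θ)
        have e1 : ((((n:ℝ)+3)*θ) - (((n:ℝ)+1)*θ)) / 2 = θ := by ring
        have e2 : ((((n:ℝ)+3)*θ) + (((n:ℝ)+1)*θ)) / 2 = ((n:ℝ)+2)*θ := by ring
        rw [e1, e2] at h
        have e3 : (((n+2:ℕ):ℝ)+1)*θ = ((n:ℝ)+3)*θ := by push_cast; ring
        have e4 : ((n+2:ℕ):ℝ)*θ = ((n:ℝ)+2)*θ := by push_cast; ring
        rw [e3, e4]
        linarith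
      rw [hstep, Finset.sum_range_succ, Finset.sum_range_succ]
      have hs : ∑ k ∈ Finset.range (n+1),
          (if k = n+2 then (2:ℝ) else if k ≤ n then a k else 0) * Real.cos ((k:ℝ)*θ)
          = ∑ k ∈ Finset.range (n+1), a k * Real.cos ((k:ℝ)*θ) := by
        refine Finset.sum_congr rfl fun k hk => ?_
        rw [Finset.mem_range] at hk
        rw [if_neg (by omega), if_pos (by omega)]
      rw [hs]
      have e1 : (if n+1 = n+2 then (2:ℝ) else if n+1 ≤ n then a (n+1) else 0) = 0 := by
        rw [if_neg (by omega), if_neg (by omega)]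
      have e2 : (if n+2 = n+2 then (2:ℝ) else if n+2 ≤ n then a (n+2) else 0) = 2 := if_pos rfl
      simp only [e1, e2, if_true]
      rw [ha θ]
      ring

private lemma sin_expand_le (N n : ℕ) (hn : n ≤ N) : ∃ a : ℕ → ℝ, ∀ θ : ℝ,
    Real.sin (((n:ℝ)+1)*θ)
      = (∑ k ∈ Finset.range (N+1), a k * Real.cos ((k:ℝ)*θ)) * Real.sin θ := by
  obtain ⟨a, ha⟩ := sin_expand'' n
  refine ⟨fun k => if k < n+1 then a k else 0, fun θ => ?_⟩
  rw [ha θ]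
  congr 1
  rw [← Finset.sum_subset (Finset.range_subset_range.2 (by omega : n+1 ≤ N+1))
    (fun k _ hk => by simp only []; rw [if_neg (by simpa using hk), zero_mul])]
  exact (Finset.sum_congr rfl fun k hk => by simp only []; rw [if_pos (Finset.mem_range.mp hk)]).symm

/-- For a continuous, strictly positive weight `v` on `[−1,1]` and `d ≥ N`, the
`(d+1) × (N+1)` matrix with entries `J_{k,n} = ∫_0^π cos(kθ) sin((n+1)θ)/v(cos θ) dθ`
is injective. -/
theorem J_matrix_injective (v : ℝ → ℝ)
    (hv : ContinuousOn v (Set.Icc (-1 : ℝ) 1))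
    (hvpos : ∀ x ∈ Set.Icc (-1 : ℝ) 1, 0 < v x)
    (N d : ℕ) (hd : N ≤ d)
    (J : Matrix (Fin (d + 1)) (Fin (N + 1)) ℝ)
    (hJ : ∀ (k : Fin (d + 1)) (n : Fin (N + 1)),
      J k n = ∫ θ in (0:ℝ)..Real.pi,
        Real.cos ((k : ℕ) * θ) * Real.sin (((n : ℕ) + 1) * θ) / v (Real.cos θ)) :
    ∀ q : Fin (N + 1) → ℝ, J.mulVec q = 0 → q = 0 := by
  intro q hq
  set w : ℝ → ℝ := fun θ => v (Real.cos θ) with hw_def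
  have hmem : ∀ θ : ℝ, Real.cos θ ∈ Set.Icc (-1:ℝ) 1 :=
    fun θ => ⟨Real.neg_one_le_cos θ, Real.cos_le_one θ⟩
  have hw : Continuous w := by
    rw [← continuousOn_univ]
    exact hv.comp Real.continuous_cos.continuousOn (fun θ _ => hmem θ)
  have hwpos : ∀ θ, 0 < w θ := fun θ => hvpos _ (hmem θ)
  have hwne : ∀ θ, w θ ≠ 0 := fun θ => (hwpos θ).ne'
  have hint : ∀ (φ : ℝ → ℝ), Continuous φ →
      IntervalIntegrable (fun θ => φ θ / w θ) volume 0 Real.pi :=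
    fun φ hφ => (hφ.div hw hwne).intervalIntegrable _ _
  set g : ℝ → ℝ := fun θ => ∑ n : Fin (N+1), q n * Real.sin ((((n:ℕ):ℝ)+1)*θ) with hg_def
  have hg_cont : Continuous g := continuous_finset_sum _ fun n _ =>
    continuous_const.mul (Real.continuous_sin.comp (continuous_const.mul continuous_id))
  -- rows give zero integrals
  have hrow : ∀ k : ℕ, k ≤ d →
      ∫ θ in (0:ℝ)..Real.pi, Real.cos ((k:ℝ)*θ) * g θ / w θ = 0 := by
    intro k hk
    have h0 : ∑ n : Fin (N+1), J ⟨k, by omega⟩ n * q n = 0 := by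
      simpa [Matrix.mulVec, dotProduct] using congrFun hq ⟨k, by omega⟩
    have hInt : ∀ n : Fin (N+1), IntervalIntegrable
        (fun θ => Real.cos ((k:ℝ)*θ) * Real.sin ((((n:ℕ):ℝ)+1)*θ) / w θ * q n) volume 0 Real.pi :=
      fun n => (hint _ ((Real.continuous_cos.comp (continuous_const.mul continuous_id)).mul
        (Real.continuous_sin.comp (continuous_const.mul continuous_id)))).mul_const _
    calc ∫ θ in (0:ℝ)..Real.pi, Real.cos ((k:ℝ)*θ) * g θ / w θ
        = ∫ θ in (0:ℝ)..Real.pi, ∑ n : Fin (N+1),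
            Real.cos ((k:ℝ)*θ) * Real.sin ((((n:ℕ):ℝ)+1)*θ) / w θ * q n := by
          refine intervalIntegral.integral_congr fun θ _ => ?_
          simp only [hg_def, Finset.mul_sum, Finset.sum_div]
          exact Finset.sum_congr rfl fun n _ => by ring
      _ = ∑ n : Fin (N+1), ∫ θ in (0:ℝ)..Real.pi,
            Real.cos ((k:ℝ)*θ) * Real.sin ((((n:ℕ):ℝ)+1)*θ) / w θ * q n :=
          intervalIntegral.integral_finset_sum fun n _ => hInt n
      _ = ∑ n : Fin (N+1), J ⟨k, by omega⟩ n * q n := by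
          refine Finset.sum_congr rfl fun n _ => ?_
          rw [intervalIntegral.integral_mul_const, hJ]
      _ = 0 := h0
  -- expansion coefficients
  have hAex : ∀ n : Fin (N+1), ∃ a : ℕ → ℝ, ∀ θ : ℝ, Real.sin ((((n:ℕ):ℝ)+1)*θ)
      = (∑ k ∈ Finset.range (N+1), a k * Real.cos ((k:ℝ)*θ)) * Real.sin θ :=
    fun n => sin_expand_le N n (Nat.lt_succ_iff.mp n.isLt)
  choose A hA using hAex
  set b : ℕ → ℝ := fun k => ∑ n : Fin (N+1), q n * A n k with hb_def
  set G : ℝ → ℝ := fun θ => ∑ k ∈ Finset.range (N+1), b k * Real.cos ((k:ℝ)*θ) with hG_def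
  have hG_cont : Continuous G := continuous_finset_sum _ fun k _ =>
    continuous_const.mul (Real.continuous_cos.comp (continuous_const.mul continuous_id))
  have hgG : ∀ θ, g θ = G θ * Real.sin θ := by
    intro θ
    simp only [hg_def, hG_def, hb_def]
    simp_rw [hA _ θ]
    simp only [Finset.sum_mul, Finset.mul_sum]
    rw [Finset.sum_comm]
    exact Finset.sum_congr rfl fun n _ => Finset.sum_congr rfl fun k _ => by ring
  -- combine
  have hGg : ∫ θ in (0:ℝ)..Real.pi, G θ * g θ / w θ = 0 := by
    have hφ : ∀ k : ℕ, Continuous fun θ => Real.cos ((k:ℝ)*θ) * g θ :=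
      fun k => (Real.continuous_cos.comp (continuous_const.mul continuous_id)).mul hg_cont
    calc ∫ θ in (0:ℝ)..Real.pi, G θ * g θ / w θ
        = ∫ θ in (0:ℝ)..Real.pi, ∑ k ∈ Finset.range (N+1),
            b k * (Real.cos ((k:ℝ)*θ) * g θ / w θ) := by
          refine intervalIntegral.integral_congr fun θ _ => ?_
          simp only [hG_def, Finset.sum_mul, Finset.sum_div]
          exact Finset.sum_congr rfl fun k _ => by ring
      _ = ∑ k ∈ Finset.range (N+1), b k *
            ∫ θ in (0:ℝ)..Real.pi, Real.cos ((k:ℝ)*θ) * g θ / w θ := by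
          rw [intervalIntegral.integral_finset_sum
            (fun k _ => ((hint _ (hφ k)).const_mul _))]
          exact Finset.sum_congr rfl fun k _ => intervalIntegral.integral_const_mul _ _
      _ = 0 := Finset.sum_eq_zero fun k hk => by
          rw [hrow k (le_trans (Nat.lt_succ_iff.mp (Finset.mem_range.mp hk)) hd), mul_zero]
  -- nonnegative integrand with zero integral
  have key : ∀ θ ∈ Set.Ioc (0:ℝ) Real.pi, G θ ^ 2 * Real.sin θ / w θ = 0 := by
    have hGg2 : ∫ θ in (0:ℝ)..Real.pi, G θ ^ 2 * Real.sin θ / w θ = 0 := by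
      exact (intervalIntegral.integral_congr
        (g := fun θ => G θ * g θ / w θ) fun θ _ => by
          show G θ ^ 2 * Real.sin θ / w θ = G θ * g θ / w θ
          rw [hgG θ]; ring).trans hGg
    have hnn : ∀ θ ∈ Set.Ioc (0:ℝ) Real.pi, 0 ≤ G θ ^ 2 * Real.sin θ / w θ := by
      intro θ hθ
      have hs : 0 ≤ Real.sin θ := Real.sin_nonneg_of_nonneg_of_le_pi hθ.1.le hθ.2
      have hwθ := hwpos θ
      positivity
    have hfi := hint (fun θ => G θ ^ 2 * Real.sin θ) ((hG_cont.pow 2).mul Real.continuous_sin)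
    have hae := (intervalIntegral.integral_eq_zero_iff_of_le_of_nonneg_ae Real.pi_pos.le
        ((ae_restrict_iff' measurableSet_Ioc).2 (Filter.Eventually.of_forall hnn)) hfi).mp hGg2
    exact Measure.eqOn_Ioc_of_ae_eq volume hae
      ((((hG_cont.pow 2).mul Real.continuous_sin).div hw hwne).continuousOn) continuousOn_const
  have hG0 : ∀ θ ∈ Set.Ioo (0:ℝ) Real.pi, G θ = 0 := by
    intro θ hθ
    have h := key θ ⟨hθ.1, hθ.2.le⟩
    have hs : 0 < Real.sin θ := Real.sin_pos_of_pos_of_lt_pi hθ.1 hθ.2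
    have hwθ := hwpos θ
    have hG2 : G θ ^ 2 = 0 := by
      rw [div_eq_zero_iff] at h
      rcases h with h | h
      · exact (mul_eq_zero.mp h).resolve_right hs.ne'
      · exact absurd h hwθ.ne'
    exact pow_eq_zero_iff (two_ne_zero) |>.mp hG2
  have hg0 : ∀ θ ∈ Set.Icc (0:ℝ) Real.pi, g θ = 0 := by
    intro θ hθ
    rw [hgG θ]
    rcases eq_or_lt_of_le hθ.1 with h0 | h0
    · rw [← h0]; simp
    rcases eq_or_lt_of_le hθ.2 with h1 | h1
    · rw [h1]; simp
    · rw [hG0 θ ⟨h0, h1⟩, zero_mul]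
  -- conclude via orthogonality
  funext m
  have h1 : ∫ θ in (0:ℝ)..Real.pi, Real.sin ((((m:ℕ):ℝ)+1)*θ) * g θ = 0 := by
    have hEq : Set.EqOn (fun θ => Real.sin ((((m:ℕ):ℝ)+1)*θ) * g θ) 0
        (Set.uIcc 0 Real.pi) := by
      intro θ hθ
      rw [Set.uIcc_of_le Real.pi_pos.le] at hθ
      simp [hg0 θ hθ]
    rw [intervalIntegral.integral_congr hEq]
    simp
  have h2 : ∫ θ in (0:ℝ)..Real.pi, Real.sin ((((m:ℕ):ℝ)+1)*θ) * g θ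
      = q m * (Real.pi/2) := by
    calc ∫ θ in (0:ℝ)..Real.pi, Real.sin ((((m:ℕ):ℝ)+1)*θ) * g θ
        = ∫ θ in (0:ℝ)..Real.pi, ∑ n : Fin (N+1),
            (Real.sin ((((m:ℕ):ℝ)+1)*θ) * Real.sin ((((n:ℕ):ℝ)+1)*θ)) * q n := by
          refine intervalIntegral.integral_congr fun θ _ => ?_
          simp only [hg_def, Finset.mul_sum]
          exact Finset.sum_congr rfl fun n _ => by ring
      _ = ∑ n : Fin (N+1), ∫ θ in (0:ℝ)..Real.pi,
            (Real.sin ((((m:ℕ):ℝ)+1)*θ) * Real.sin ((((n:ℕ):ℝ)+1)*θ)) * q n :=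
          intervalIntegral.integral_finset_sum fun n _ =>
            (((Real.continuous_sin.comp (continuous_const.mul continuous_id)).mul
              (Real.continuous_sin.comp (continuous_const.mul continuous_id))).mul
                continuous_const).intervalIntegrable _ _
      _ = ∑ n : Fin (N+1), (if (m:ℕ) = (n:ℕ) then Real.pi/2 else 0) * q n := by
          refine Finset.sum_congr rfl fun n _ => ?_
          rw [intervalIntegral.integral_mul_const, sin_orth']
      _ = q m * (Real.pi/2) := by
          rw [Finset.sum_eq_single m]
          · rw [if_pos rfl, mul_comm]
          · intro n _ hn
            rw [if_neg (fun h => hn (Fin.ext h.symm)), zero_mul]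
          · intro h
            exact absurd (Finset.mem_univ m) h
  have hqm : q m * (Real.pi/2) = 0 := by rw [← h2, h1]
  have hπ : Real.pi/2 ≠ 0 := by positivity
  simpa using (mul_eq_zero.mp hqm).resolve_right hπ
end
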